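/- Let s₁, s₂ : [0,T] → ℝ be differentiable functions solving the slow-down system, i.e. s₁'(t) = L·s₁(t)·(s₁(t)² + s₂(t)²)^α and s₂'(t) = −L·s₂(t)·(s₁(t)² + s₂(t)²)^α for all t ∈ [0,T], with s₁(t) > 0 and s₂(t) > 0 for all t ∈ [0,T]. Then for all 0 ≤ a ≤ t ≤ T one has s₂(t) ≤ s₂(a)·(1 + C₀·s₂(a)^{2α}·(t−a))^{−1/(2α)}. -/

import Mathlib

/-- Lemma "s1 and s2 approx" (b): upper bound on `s₂` along a solution of the
slow-down system `s₁' = L s₁ (s₁² + s₂²)^α`, `s₂' = -L s₂ (s₁² + s₂²)^α`,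
where `L = (log λ) (p/2)^{2α}` and `C₀ = 2 α L`. -/
theorem slowdown_s2_upper_bound
    (lam α : ℝ) (hlam : 1 < lam) (hα : α ∈ Set.Ioo (0 : ℝ) 1)
    (p : ℤ) (hp : 3 ≤ p)
    (L C₀ : ℝ)
    (hL : L = Real.log lam * ((p : ℝ) / 2) ^ (2 * α))
    (hC₀ : C₀ = 2 * α * L)
    (T : ℝ) (s₁ s₂ : ℝ → ℝ)
    (hs₁ : ∀ t ∈ Set.Icc (0 : ℝ) T,
      HasDerivAt s₁ (L * s₁ t * (s₁ t ^ 2 + s₂ t ^ 2) ^ α) t)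
    (hs₂ : ∀ t ∈ Set.Icc (0 : ℝ) T,
      HasDerivAt s₂ (-(L * s₂ t * (s₁ t ^ 2 + s₂ t ^ 2) ^ α)) t)
    (hpos₁ : ∀ t ∈ Set.Icc (0 : ℝ) T, 0 < s₁ t)
    (hpos₂ : ∀ t ∈ Set.Icc (0 : ℝ) T, 0 < s₂ t)
    (a t : ℝ) (ha : 0 ≤ a) (hat : a ≤ t) (htT : t ≤ T) :
    s₂ t ≤ s₂ a * (1 + C₀ * s₂ a ^ (2 * α) * (t - a)) ^ (-(1 / (2 * α))) := by
  obtain ⟨hα0, hα1⟩ := hα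
  have hLpos : 0 < L := by
    rw [hL]
    have h2 : (0:ℝ) < (p : ℝ) / 2 := by
      have : (3:ℝ) ≤ (p:ℝ) := by exact_mod_cast hp
      linarith
    exact mul_pos (Real.log_pos hlam) (Real.rpow_pos_of_pos h2 _)
  have hC₀pos : 0 < C₀ := by rw [hC₀]; positivity
  have haT : a ∈ Set.Icc (0:ℝ) T := ⟨ha, le_trans hat htT⟩
  have htmem : t ∈ Set.Icc (0:ℝ) T := ⟨le_trans ha hat, htT⟩
  -- the function h u = s₂ u ^ (-(2α)) - C₀ * u is monotone on [a, t]
  set g : ℝ → ℝ := fun u => s₂ u ^ (-(2*α)) - C₀ * u with hg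
  have hsub : Set.Icc a t ⊆ Set.Icc (0:ℝ) T := Set.Icc_subset_Icc ha htT
  have hderiv : ∀ u ∈ Set.Icc (0:ℝ) T,
      HasDerivAt g (2*α*L * ((s₁ u ^ 2 + s₂ u ^ 2) ^ α * s₂ u ^ (-(2*α))) - C₀) u := by
    intro u hu
    have hpos := hpos₂ u hu
    have hmul : s₂ u * s₂ u ^ (-(2*α) - 1) = s₂ u ^ (-(2*α)) := by
      nth_rewrite 1 [← Real.rpow_one (s₂ u)]
      rw [← Real.rpow_add hpos]; ring_nf
    have h2 := ((hs₂ u hu).rpow_const (p := -(2*α)) (Or.inl hpos.ne')).sub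
      ((hasDerivAt_id u).const_mul C₀)
    simp only [id_eq, mul_one] at h2
    refine h2.congr_deriv ?_
    rw [← hmul]; ring
  have hd_nonneg : ∀ u ∈ Set.Icc (0:ℝ) T,
      0 ≤ 2*α*L * ((s₁ u ^ 2 + s₂ u ^ 2) ^ α * s₂ u ^ (-(2*α))) - C₀ := by
    intro u hu
    have hpos := hpos₂ u hu
    have hge : s₂ u ^ (2*α) ≤ (s₁ u ^ 2 + s₂ u ^ 2) ^ α := by
      have : s₂ u ^ (2*α) = (s₂ u ^ 2) ^ α := by
        rw [← Real.rpow_natCast (s₂ u) 2, ← Real.rpow_mul hpos.le]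
        norm_num
      rw [this]
      apply Real.rpow_le_rpow (by positivity) (by nlinarith [sq_nonneg (s₁ u)]) hα0.le
    have hprod : 1 ≤ (s₁ u ^ 2 + s₂ u ^ 2) ^ α * s₂ u ^ (-(2*α)) := by
      have h2 : s₂ u ^ (2*α) * s₂ u ^ (-(2*α)) = 1 := by
        rw [← Real.rpow_add hpos]; norm_num
      calc 1 = s₂ u ^ (2*α) * s₂ u ^ (-(2*α)) := h2.symm
        _ ≤ _ := by
          apply mul_le_mul_of_nonneg_right hge (Real.rpow_nonneg hpos.le _)
    nlinarith [hC₀pos, hC₀]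
  have hmono : MonotoneOn g (Set.Icc a t) := by
    apply monotoneOn_of_hasDerivWithinAt_nonneg (convex_Icc a t)
      (f' := fun u => 2*α*L * ((s₁ u ^ 2 + s₂ u ^ 2) ^ α * s₂ u ^ (-(2*α))) - C₀)
    · exact fun u hu => (hderiv u (hsub hu)).continuousAt.continuousWithinAt
    · intro u hu
      exact (hderiv u (hsub (interior_subset hu))).hasDerivWithinAt
    · intro u hu
      exact hd_nonneg u (hsub (interior_subset hu))
  have hkey : g a ≤ g t :=
    hmono (Set.left_mem_Icc.2 hat) (Set.right_mem_Icc.2 hat) hat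
  -- so s₂ a ^ (-(2α)) + C₀ (t - a) ≤ s₂ t ^ (-(2α))
  have hkey' : s₂ a ^ (-(2*α)) + C₀ * (t - a) ≤ s₂ t ^ (-(2*α)) := by
    simp only [hg] at hkey; linarith
  have hpa := hpos₂ a haT
  have hpt := hpos₂ t htmem
  set B : ℝ := s₂ a ^ (-(2*α)) + C₀ * (t - a) with hB
  have hBpos : 0 < B := by
    have h1' : 0 < s₂ a ^ (-(2*α)) := Real.rpow_pos_of_pos hpa _
    have h2' : 0 ≤ C₀ * (t - a) := mul_nonneg hC₀pos.le (by linarith)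
    rw [hB]; linarith
  -- take rpow (-(1/(2α))) of both sides
  have hαne : (2*α) ≠ 0 := by positivity
  have hexp : -(1/(2*α)) ≤ 0 := by rw [neg_nonpos]; positivity
  have hαne' : α ≠ 0 := hα0.ne'
  have hmain : s₂ t ≤ B ^ (-(1/(2*α))) := by
    have h1 : (s₂ t ^ (-(2*α))) ^ (-(1/(2*α))) ≤ B ^ (-(1/(2*α))) :=
      Real.rpow_le_rpow_of_nonpos hBpos hkey' hexp
    have h2 : (s₂ t ^ (-(2*α))) ^ (-(1/(2*α))) = s₂ t := by
      rw [← Real.rpow_mul hpt.le,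
        show (-(2*α)) * (-(1/(2*α))) = 1 by field_simp, Real.rpow_one]
    linarith [h2.symm.le]
  -- rewrite B
  have hBfact : B = s₂ a ^ (-(2*α)) * (1 + C₀ * s₂ a ^ (2*α) * (t - a)) := by
    rw [hB, mul_add, mul_one]
    congr 1
    rw [show s₂ a ^ (-(2*α)) * (C₀ * s₂ a ^ (2*α) * (t-a)) =
      (s₂ a ^ (-(2*α)) * s₂ a ^ (2*α)) * (C₀ * (t-a)) by ring,
      ← Real.rpow_add hpa]
    norm_num
  have hfac_pos : 0 < 1 + C₀ * s₂ a ^ (2*α) * (t - a) := by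
    have : 0 ≤ C₀ * s₂ a ^ (2*α) * (t - a) :=
      mul_nonneg (by positivity) (sub_nonneg.mpr hat)
    linarith
  calc s₂ t ≤ B ^ (-(1/(2*α))) := hmain
    _ = s₂ a * (1 + C₀ * s₂ a ^ (2*α) * (t - a)) ^ (-(1/(2*α))) := by
        rw [hBfact, Real.mul_rpow (Real.rpow_nonneg hpa.le _) hfac_pos.le]
        congr 1
        rw [← Real.rpow_mul hpa.le,
          show (-(2*α)) * (-(1/(2*α))) = 1 by field_simp, Real.rpow_one]
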